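/- Let Φ : [t0,T] × [t0,T] × ℝ → ℝ be a function such that for every (s,x) ∈ [t0,T] × ℝ, the map t ↦ Φ(t,s,x) is a Carathéodory solution with data (s,x). Then the map (t,s,x) ↦ Φ(t,s,x) is continuous on [t0,T] × [t0,T] × ℝ. -/

import Mathlib

open MeasureTheory Set

/-- A Carathéodory solution on `[t0, T]` with data `(s, x)`. -/
def IsCaratheodorySol (t0 T : ℝ) (G : ℝ → ℝ → ℝ) (s x : ℝ) (Φ : ℝ → ℝ) : Prop :=
  ContinuousOn Φ (Icc t0 T) ∧
    ∀ t ∈ Icc t0 T, Φ t = x + ∫ r in s..t, G r (Φ r)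

section Aux
variable {t0 T : ℝ} {G : ℝ → ℝ → ℝ}
  (hmeas : ∀ x : ℝ, Measurable fun t => G t x)
  {m : ℝ} (hm : 0 ≤ m) (hbound : ∀ t ∈ Icc t0 T, ∀ x : ℝ, |G t x| ≤ m)
  {L : ℝ} (hL : 0 ≤ L)
  (hlip : ∀ t ∈ Icc t0 T, ∀ x y : ℝ, |G t x - G t y| ≤ L * |x - y|)

private lemma carath_sub {a b : ℝ} (ha : a ∈ Icc t0 T) (hb : b ∈ Icc t0 T) :
    Set.uIoc a b ⊆ Icc t0 T := by
  apply Set.uIoc_subset_uIcc.trans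
  rw [Set.uIcc_eq_union]
  exact Set.union_subset (Set.Icc_subset_Icc ha.1 hb.2) (Set.Icc_subset_Icc hb.1 ha.2)

include hmeas hL hlip in
private lemma carath_uncurry_meas :
    Measurable (Function.uncurry fun x t => if t ∈ Icc t0 T then G t x else 0) := by
  apply measurable_uncurry_of_continuous_of_measurable
  · intro t
    by_cases h : t ∈ Icc t0 T
    · simp only [h, if_true]
      have : LipschitzWith L.toNNReal (fun x => G t x) := by
        apply LipschitzWith.of_dist_le_mul
        intro x y
        rw [Real.dist_eq, Real.dist_eq, Real.coe_toNNReal L hL]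
        exact hlip t h x y
      exact this.continuous
    · simp only [h, if_false]
      exact continuous_const
  · intro x
    exact Measurable.ite measurableSet_Icc (hmeas x) measurable_const

include hmeas hm hbound hL hlip in
private lemma carath_integrable
    {φ : ℝ → ℝ} (hφ : ContinuousOn φ (Icc t0 T))
    {a b : ℝ} (ha : a ∈ Icc t0 T) (hb : b ∈ Icc t0 T) :
    IntervalIntegrable (fun r => G r (φ r)) volume a b := by
  have hsub : Set.uIoc a b ⊆ Icc t0 T := carath_sub ha hb
  rw [intervalIntegrable_iff]
  have hφm : AEMeasurable φ (volume.restrict (Set.uIoc a b)) :=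
    (hφ.aemeasurable measurableSet_Icc).mono_measure (Measure.restrict_mono hsub le_rfl)
  have hGm : AEMeasurable (fun r => if r ∈ Icc t0 T then G r (φ r) else 0)
      (volume.restrict (Set.uIoc a b)) :=
    (carath_uncurry_meas hmeas hL hlip).comp_aemeasurable (hφm.prodMk aemeasurable_id)
  have hae : ∀ᵐ r ∂(volume.restrict (Set.uIoc a b)), r ∈ Set.uIoc a b := ae_restrict_mem measurableSet_uIoc
  have heqae : (fun r => if r ∈ Icc t0 T then G r (φ r) else 0) =ᵐ[volume.restrict (Set.uIoc a b)]
      (fun r => G r (φ r)) := by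
    filter_upwards [hae] with r hr
    simp [hsub hr]
  haveI : IsFiniteMeasure (volume.restrict (Set.uIoc a b)) :=
    ⟨by rw [Measure.restrict_apply_univ]; exact measure_Ioc_lt_top⟩
  constructor
  · exact (hGm.congr heqae).aestronglyMeasurable
  · apply HasFiniteIntegral.of_bounded (C := m)
    filter_upwards [hae] with r hr
    rw [Real.norm_eq_abs]
    exact hbound r (hsub hr) (φ r)

include hL in
private lemma gronwall_aux {δ' y : ℝ} :
    δ' + L * gronwallBound 0 L δ' y ≤ δ' * Real.exp (L * y) := by
  rcases eq_or_lt_of_le hL with h0 | h0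
  · rw [← h0]
    simp [gronwallBound_K0]
  · rw [gronwallBound_of_K_ne_0 h0.ne']
    have h1 : L * (0 * Real.exp (L * y) + δ' / L * (Real.exp (L * y) - 1))
        = δ' * (Real.exp (L * y) - 1) := by
      field_simp
      ring
    rw [h1]
    have : δ' + δ' * (Real.exp (L * y) - 1) = δ' * Real.exp (L * y) := by ring
    rw [this]

include hmeas hm hbound hL hlip in
private lemma carath_key
    {Φ : ℝ → ℝ → ℝ → ℝ}
    (hΦ : ∀ s ∈ Icc t0 T, ∀ x : ℝ, IsCaratheodorySol t0 T G s x (fun t => Φ t s x))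
    {s s' : ℝ} (hs : s ∈ Icc t0 T) (hs' : s' ∈ Icc t0 T) (x x' : ℝ)
    {t : ℝ} (ht : t ∈ Icc t0 T) :
    |Φ t s x - Φ t s' x'| ≤ (|x - x'| + m * |s - s'|) * Real.exp (L * (T - t0)) := by
  have hT : t0 ≤ T := hs.1.trans hs.2
  obtain ⟨hc, he⟩ := hΦ s hs x
  obtain ⟨hc', he'⟩ := hΦ s' hs' x'
  set φ : ℝ → ℝ := fun t => Φ t s x with hφdef
  set φ' : ℝ → ℝ := fun t => Φ t s' x' with hφ'def
  set ψ : ℝ → ℝ := fun t => φ t - φ' t with hψdef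
  have hψc : ContinuousOn ψ (Icc t0 T) := hc.sub hc'
  set δ' : ℝ := |x - x'| + m * |s - s'| with hδ'def
  have hδ' : 0 ≤ δ' := add_nonneg (abs_nonneg _) (mul_nonneg hm (abs_nonneg _))
  -- continuous extension of |ψ| to all of ℝ
  set q : ℝ → ℝ := fun r => max t0 (min T r) with hqdef
  have hqc : Continuous q := continuous_const.max (continuous_const.min continuous_id)
  have hqmem : ∀ r, q r ∈ Icc t0 T := fun r => ⟨le_max_left _ _, max_le hT (min_le_left _ _)⟩
  have hqeq : ∀ r ∈ Icc t0 T, q r = r := by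
    intro r hr
    rw [hqdef]
    simp only
    rw [min_eq_right hr.2, max_eq_right hr.1]
  set ψa : ℝ → ℝ := fun r => |ψ (q r)| with hψadef
  have hψac : Continuous ψa := continuous_abs.comp (hψc.comp_continuous hqc hqmem)
  have hψaeq : ∀ r ∈ Icc t0 T, ψa r = |ψ r| := by
    intro r hr
    rw [hψadef]
    simp only
    rw [hqeq r hr]
  have hψann : ∀ r, 0 ≤ ψa r := fun r => abs_nonneg _
  -- the basic integral inequality
  have hbd : ∀ c ∈ Icc t0 T, |ψ c| ≤ δ' + L * |∫ r in s..c, ψa r| := by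
    intro c hcmem
    have h1 : IntervalIntegrable (fun r => G r (φ' r)) volume s' s :=
      carath_integrable hmeas hm hbound hL hlip hc' hs' hs
    have h2 : IntervalIntegrable (fun r => G r (φ' r)) volume s c :=
      carath_integrable hmeas hm hbound hL hlip hc' hs hcmem
    have h3 : IntervalIntegrable (fun r => G r (φ r)) volume s c :=
      carath_integrable hmeas hm hbound hL hlip hc hs hcmem
    have hψeq : ψ c = (x - x') - (∫ r in s'..s, G r (φ' r))
        + ∫ r in s..c, (G r (φ r) - G r (φ' r)) := by
      have e1 := he c hcmem
      have e2 := he' c hcmem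
      have e3 := intervalIntegral.integral_add_adjacent_intervals h1 h2
      have e4 := intervalIntegral.integral_sub h3 h2
      show φ c - φ' c = _
      rw [e1, e2, e4, ← e3]
      ring
    have b1 : |∫ r in s'..s, G r (φ' r)| ≤ m * |s - s'| := by
      have := intervalIntegral.norm_integral_le_of_norm_le_const (C := m)
        (f := fun r => G r (φ' r)) (a := s') (b := s)
        (fun r hr => hbound r (carath_sub hs' hs hr) _)
      rwa [Real.norm_eq_abs] at this
    have b2 : |∫ r in s..c, (G r (φ r) - G r (φ' r))| ≤ L * |∫ r in s..c, ψa r| := by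
      have hgint : IntervalIntegrable (fun r => L * ψa r) volume s c :=
        (continuous_const.mul hψac).intervalIntegrable _ _
      have hle : ∀ᵐ r ∂(volume.restrict (Set.uIoc s c)),
          ‖G r (φ r) - G r (φ' r)‖ ≤ L * ψa r := by
        filter_upwards [ae_restrict_mem measurableSet_uIoc] with r hr
        have hrI := carath_sub hs hcmem hr
        rw [Real.norm_eq_abs, hψaeq r hrI]
        exact hlip r hrI (φ r) (φ' r)
      have := intervalIntegral.norm_integral_le_abs_of_norm_le hle hgint
      rw [Real.norm_eq_abs, intervalIntegral.integral_const_mul, abs_mul,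
        abs_of_nonneg hL] at this
      exact this
    rw [hψeq]
    have htri : |(x - x') - (∫ r in s'..s, G r (φ' r))
        + ∫ r in s..c, (G r (φ r) - G r (φ' r))|
        ≤ |x - x'| + |∫ r in s'..s, G r (φ' r)|
          + |∫ r in s..c, (G r (φ r) - G r (φ' r))| :=
      (abs_add_le _ _).trans (add_le_add_left (abs_sub _ _) _)
    rw [hδ'def]
    linarith
  -- the primitive of ψa based at s
  set u : ℝ → ℝ := fun c => ∫ r in s..c, ψa r with hudef
  have hud : ∀ c, HasDerivAt u (ψa c) c := fun c =>
    (hψac.integral_hasStrictDerivAt s c).hasDerivAt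
  have huc : Continuous u := continuous_iff_continuousAt.2 fun c => (hud c).continuousAt
  have hunneg : ∀ c, s ≤ c → 0 ≤ u c := fun c hc =>
    intervalIntegral.integral_nonneg hc fun r _ => hψann r
  -- forward Gronwall
  have main : ∀ c ∈ Icc t0 T, s ≤ c → |ψ c| ≤ δ' * Real.exp (L * (c - s)) := by
    intro c hcmem hsc
    have hgr := norm_le_gronwallBound_of_norm_deriv_right_le (f := u) (f' := ψa)
      (δ := 0) (K := L) (ε := δ') (a := s) (b := T)
      huc.continuousOn (fun r _ => (hud r).hasDerivWithinAt)
      (by simp [hudef, intervalIntegral.integral_same])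
      ?_ c ⟨hsc, hcmem.2⟩
    · have h1 := hbd c hcmem
      have h2 : |∫ r in s..c, ψa r| = ‖u c‖ := by rw [Real.norm_eq_abs]
      rw [h2] at h1
      calc |ψ c| ≤ δ' + L * ‖u c‖ := h1
        _ ≤ δ' + L * gronwallBound 0 L δ' (c - s) :=
          add_le_add_right (mul_le_mul_of_nonneg_left hgr hL) _
        _ ≤ δ' * Real.exp (L * (c - s)) := gronwall_aux hL
    · intro r hr
      have hrmem : r ∈ Icc t0 T := ⟨hs.1.trans hr.1, hr.2.le⟩
      have h1 := hbd r hrmem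
      have h2 : |∫ r' in s..r, ψa r'| = |u r| := rfl
      rw [h2, abs_of_nonneg (hunneg r hr.1)] at h1
      rw [Real.norm_eq_abs, Real.norm_eq_abs, hψaeq r hrmem, abs_abs,
        abs_of_nonneg (hunneg r hr.1)]
      linarith
  -- backward Gronwall
  have main' : ∀ c ∈ Icc t0 T, c ≤ s → |ψ c| ≤ δ' * Real.exp (L * (s - c)) := by
    intro c hcmem hcs
    set v : ℝ → ℝ := fun τ => -u (s - τ) with hvdef
    have hvd : ∀ τ, HasDerivAt v (ψa (s - τ)) τ := by
      intro τ
      have h1 : HasDerivAt (fun τ : ℝ => s - τ) (-1) τ := by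
        exact (hasDerivAt_id' τ).const_sub s
      have h2 := ((hud (s - τ)).comp τ h1).neg
      refine h2.congr_deriv ?_
      ring
    have hvnneg : ∀ τ, 0 ≤ τ → 0 ≤ v τ := by
      intro τ hτ
      rw [hvdef]
      simp only
      rw [hudef]
      simp only
      rw [← intervalIntegral.integral_symm]
      exact intervalIntegral.integral_nonneg (by linarith) fun r _ => hψann r
    have hvc : Continuous v := continuous_iff_continuousAt.2 fun τ => (hvd τ).continuousAt
    have hgr := norm_le_gronwallBound_of_norm_deriv_right_le (f := v)
      (f' := fun τ => ψa (s - τ))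
      (δ := 0) (K := L) (ε := δ') (a := 0) (b := s - t0)
      hvc.continuousOn (fun τ _ => (hvd τ).hasDerivWithinAt)
      (by simp [hvdef, hudef, intervalIntegral.integral_same])
      ?_ (s - c) ⟨by linarith, by linarith [hcmem.1]⟩
    · have h1 := hbd c hcmem
      have h2 : -v (s - c) = ∫ r in s..c, ψa r := by
        simp [hvdef, hudef, sub_sub_cancel]
      rw [← h2, abs_neg, ← Real.norm_eq_abs (v _)] at h1
      have h3 : gronwallBound 0 L δ' (s - c - 0) = gronwallBound 0 L δ' (s - c) := by
        norm_num
      rw [h3] at hgr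
      calc |ψ c| ≤ δ' + L * ‖v (s - c)‖ := h1
        _ ≤ δ' + L * gronwallBound 0 L δ' (s - c) :=
          add_le_add_right (mul_le_mul_of_nonneg_left hgr hL) _
        _ ≤ δ' * Real.exp (L * (s - c)) := gronwall_aux hL
    · intro τ hτ
      have hrmem : s - τ ∈ Icc t0 T := ⟨by linarith [hτ.2], by linarith [hτ.1, hs.2]⟩
      have h1 := hbd (s - τ) hrmem
      have h2 : -v τ = ∫ r in s..(s - τ), ψa r := by simp [hvdef, hudef]
      rw [← h2, abs_neg, abs_of_nonneg (hvnneg τ hτ.1)] at h1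
      rw [Real.norm_eq_abs, Real.norm_eq_abs, hψaeq _ hrmem, abs_abs,
        abs_of_nonneg (hvnneg τ hτ.1)]
      linarith
  -- combine
  have hexp : ∀ y : ℝ, y ≤ T - t0 → δ' * Real.exp (L * y) ≤ δ' * Real.exp (L * (T - t0)) :=
    fun y hy => mul_le_mul_of_nonneg_left
      (Real.exp_le_exp.2 (mul_le_mul_of_nonneg_left hy hL)) hδ'
  rcases le_total s t with hst | hts
  · exact (main t ht hst).trans (hexp _ (by linarith [ht.2, hs.1]))
  · exact (main' t ht hts).trans (hexp _ (by linarith [ht.1, hs.2]))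

include hmeas hm hbound hL hlip in
private lemma carath_timelip
    {Φ : ℝ → ℝ → ℝ → ℝ}
    (hΦ : ∀ s ∈ Icc t0 T, ∀ x : ℝ, IsCaratheodorySol t0 T G s x (fun t => Φ t s x))
    {s : ℝ} (hs : s ∈ Icc t0 T) (x : ℝ)
    {a b : ℝ} (ha : a ∈ Icc t0 T) (hb : b ∈ Icc t0 T) :
    |Φ a s x - Φ b s x| ≤ m * |a - b| := by
  obtain ⟨hc, he⟩ := hΦ s hs x
  have h1 : IntervalIntegrable (fun r => G r (Φ r s x)) volume s a :=
    carath_integrable hmeas hm hbound hL hlip hc hs ha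
  have h2 : IntervalIntegrable (fun r => G r (Φ r s x)) volume s b :=
    carath_integrable hmeas hm hbound hL hlip hc hs hb
  have e3 := intervalIntegral.integral_interval_sub_left h1 h2
  have hea := he a ha
  have heb := he b hb
  simp only at hea heb
  have e : Φ a s x - Φ b s x = ∫ r in b..a, G r (Φ r s x) := by
    rw [hea, heb, ← e3]
    ring
  rw [e]
  have := intervalIntegral.norm_integral_le_of_norm_le_const (C := m)
    (f := fun r => G r (Φ r s x)) (a := b) (b := a)
    (fun r hr => hbound r (carath_sub hb ha hr) _)
  rwa [Real.norm_eq_abs] at this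

end Aux

/-- Joint continuity of the Carathéodory flow `(t, s, x) ↦ Φ(t, s, x)` on
`[t0, T] × [t0, T] × ℝ`. -/
theorem caratheodory_flow_continuous
    (t0 T : ℝ) (ht : t0 < T) (G : ℝ → ℝ → ℝ)
    (hmeas : ∀ x : ℝ, Measurable fun t => G t x)
    (m : ℝ) (hm : 0 ≤ m) (hbound : ∀ t ∈ Icc t0 T, ∀ x : ℝ, |G t x| ≤ m)
    (L : ℝ) (hL : 0 ≤ L)
    (hlip : ∀ t ∈ Icc t0 T, ∀ x y : ℝ, |G t x - G t y| ≤ L * |x - y|)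
    (Φ : ℝ → ℝ → ℝ → ℝ)
    (hΦ : ∀ s ∈ Icc t0 T, ∀ x : ℝ, IsCaratheodorySol t0 T G s x (fun t => Φ t s x)) :
    ContinuousOn (fun p : ℝ × ℝ × ℝ => Φ p.1 p.2.1 p.2.2)
      (Icc t0 T ×ˢ Icc t0 T ×ˢ (univ : Set ℝ)) := by
  rw [Metric.continuousOn_iff]
  rintro ⟨a, b, c⟩ ⟨ha, hb, -⟩ ε hε
  set C := Real.exp (L * (T - t0)) with hCdef
  have hC1 : 1 ≤ C := Real.one_le_exp (mul_nonneg hL (by linarith))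
  have hCpos : 0 < C := lt_of_lt_of_le one_pos hC1
  set K := m + (1 + m) * C + 1 with hKdef
  have hKpos : 0 < K := by nlinarith
  set εK := ε / K with hεKdef
  have hεK : 0 < εK := div_pos hε hKpos
  refine ⟨εK, hεK, ?_⟩
  rintro ⟨a', b', c'⟩ ⟨ha', hb', -⟩ hdist
  have hd : max (dist a' a) (max (dist b' b) (dist c' c)) < εK := by
    rw [Prod.dist_eq, Prod.dist_eq] at hdist
    exact hdist
  have h1 : |a' - a| < εK := by
    rw [← Real.dist_eq]
    exact (le_max_left _ _).trans_lt hd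
  have h2 : |b' - b| < εK := by
    rw [← Real.dist_eq]
    exact ((le_max_left _ _).trans (le_max_right _ _)).trans_lt hd
  have h3 : |c' - c| < εK := by
    rw [← Real.dist_eq]
    exact ((le_max_right _ _).trans (le_max_right _ _)).trans_lt hd
  have est1 : |Φ a' b' c' - Φ a' b c| ≤ (|c' - c| + m * |b' - b|) * C :=
    carath_key hmeas hm hbound hL hlip hΦ hb' hb c' c ha'
  have est2 : |Φ a' b c - Φ a b c| ≤ m * |a' - a| :=
    carath_timelip hmeas hm hbound hL hlip hΦ hb c ha' ha
  have tri : |Φ a' b' c' - Φ a b c| ≤ |Φ a' b' c' - Φ a' b c| + |Φ a' b c - Φ a b c| :=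
    abs_sub_le _ _ _
  have e3 : |c' - c| + m * |b' - b| ≤ εK + m * εK :=
    add_le_add h3.le (mul_le_mul_of_nonneg_left h2.le hm)
  have e4 : (|c' - c| + m * |b' - b|) * C ≤ (εK + m * εK) * C :=
    mul_le_mul_of_nonneg_right e3 hCpos.le
  have e5 : m * |a' - a| ≤ m * εK := mul_le_mul_of_nonneg_left h1.le hm
  have hεKK : εK * K = ε := div_mul_cancel₀ ε hKpos.ne'
  have hring : (εK + m * εK) * C + m * εK = εK * K - εK := by
    rw [hKdef]
    ring
  rw [Real.dist_eq]
  simp only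
  linarith
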